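/- Let Q be a preorder and let T(Q) be the set of finite Q-labeled trees with the h-preorder: (T,t) ≤_h (V,v) iff there is a monotone map f from T to V (with respect to the tree order) such that t(τ) ≤ v(f(τ)) for all τ ∈ T. If Q is a well quasi-order, then (T(Q), ≤_h) is a well quasi-order. -/

import Mathlib

/-- A finite `Q`-labeled rooted tree: a finite nonempty prefix-closed set of finite
strings of naturals, together with a labeling. -/
structure QTree (Q : Type*) where
  nodes : Finset (List ℕ)
  nonempty : nodes.Nonempty
  prefix_closed : ∀ σ ∈ nodes, ∀ τ : List ℕ, τ <+: σ → τ ∈ nodes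
  label : List ℕ → Q

/-- The h-preorder on finite `Q`-labeled trees: `T ≤_h V` iff there is a monotone map
(w.r.t. the prefix/tree order) from `T` to `V` which is nondecreasing on labels. -/
def QTree.hle {Q : Type*} [Preorder Q] (T V : QTree Q) : Prop :=
  ∃ f : List ℕ → List ℕ,
    (∀ σ ∈ T.nodes, f σ ∈ V.nodes) ∧
    (∀ σ ∈ T.nodes, ∀ τ ∈ T.nodes, σ <+: τ → f σ <+: f τ) ∧
    (∀ σ ∈ T.nodes, T.label σ ≤ V.label (f σ))

inductive LTree (Q : Type u) : Type u
  | node : Q → List (LTree Q) → LTree Q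

namespace LTree

variable {Q : Type*}

def lab : LTree Q → Q | node q _ => q
def chl : LTree Q → List (LTree Q) | node _ ts => ts

theorem eta (t : LTree Q) : t = node t.lab t.chl := by cases t; rfl

theorem sizeOf_lt_of_mem_chl {t s : LTree Q} (h : s ∈ t.chl) : sizeOf s < sizeOf t := by
  cases t with
  | node q ts =>
    have := List.sizeOf_lt_of_mem h
    simp only [node.sizeOf_spec]
    simp only [chl] at this
    omega

section
variable [Preorder Q]

inductive Le : LTree Q → LTree Q → Prop
  | inner {A : LTree Q} {q : Q} {ts : List (LTree Q)} (t : LTree Q) (ht : t ∈ ts) :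
      Le A t → Le A (node q ts)
  | root {p : Q} {ss : List (LTree Q)} {q : Q} {ts : List (LTree Q)} :
      p ≤ q → (∀ s ∈ ss, Le s (node q ts)) → Le (node p ss) (node q ts)

theorem Le.refl (t : LTree Q) : Le t t := by
  cases t with
  | node p ss => exact Le.root le_rfl (fun s hs => Le.inner s hs (Le.refl s))
termination_by sizeOf t
decreasing_by
  have := List.sizeOf_lt_of_mem hs
  simp only [node.sizeOf_spec]
  omega

theorem Le.trans {A B C : LTree Q} (h₁ : Le A B) (h₂ : Le B C) : Le A C := by
  match C, h₂ with
  | .node c cs, .inner t ht h₂' => exact .inner t ht (Le.trans h₁ h₂')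
  | .node c cs, .root hbc hbs =>
    match B, h₁, hbs with
    | .node b bs, .inner s hs h₁', hbs => exact Le.trans h₁' (hbs s hs)
    | .node b bs, .root hab has, hbs =>
      exact .root (le_trans hab hbc) (fun x hx => Le.trans (has x hx) (.root hbc hbs))
termination_by sizeOf A + sizeOf B + sizeOf C
decreasing_by
  · have := List.sizeOf_lt_of_mem ht
    simp only [node.sizeOf_spec]
    omega
  · have := List.sizeOf_lt_of_mem hs
    simp only [node.sizeOf_spec]
    omega
  · have := List.sizeOf_lt_of_mem hx
    simp only [node.sizeOf_spec]
    omega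

instance : IsRefl (LTree Q) Le := ⟨Le.refl⟩
instance : IsTrans (LTree Q) Le := ⟨fun _ _ _ => Le.trans⟩
instance : IsPreorder (LTree Q) Le := { refl := Le.refl, trans := fun _ _ _ => Le.trans }
instance : IsPreorder (List (LTree Q)) (List.SublistForall₂ Le) :=
  { refl := refl_of _, trans := fun _ _ _ => trans_of _ }

theorem Le.of_mem_chl {t s : LTree Q} (hs : s ∈ t.chl) : Le s t := by
  cases t with
  | node q ts => exact Le.inner s hs (Le.refl s)

end
end LTree

theorem sublistForall₂_mem {α β : Type*} {r : α → β → Prop} {l₁ : List α} {l₂ : List β}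
    (h : List.SublistForall₂ r l₁ l₂) : ∀ a ∈ l₁, ∃ b ∈ l₂, r a b := by
  induction h with
  | nil => simp
  | cons hr hl ih =>
    intro a ha
    rcases List.mem_cons.1 ha with rfl | ha
    · exact ⟨_, List.mem_cons_self, hr⟩
    · obtain ⟨b, hb, hrb⟩ := ih a ha
      exact ⟨b, List.mem_cons_of_mem _ hb, hrb⟩
  | cons_right h ih =>
    intro a ha
    obtain ⟨b, hb, hrb⟩ := ih a ha
    exact ⟨b, List.mem_cons_of_mem _ hb, hrb⟩

theorem ltree_pwo {Q : Type*} [Preorder Q]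
    (hwqo : ∀ f : ℕ → Q, ∃ m n : ℕ, m < n ∧ f m ≤ f n) :
    (Set.univ : Set (LTree Q)).PartiallyWellOrderedOn LTree.Le := by
  classical
  rw [Set.PartiallyWellOrderedOn.iff_not_exists_isMinBadSeq sizeOf]
  rintro ⟨f, hf, hmin⟩
  have hS : {t : LTree Q | ∃ n, t ∈ (f n).chl}.PartiallyWellOrderedOn LTree.Le := by
    rw [Set.PartiallyWellOrderedOn.iff_forall_not_isBadSeq]
    rintro g ⟨hgS, hgbad⟩
    choose nf hnf using hgS
    obtain ⟨v, ⟨k₀, rfl⟩, hv⟩ := wellFounded_lt.has_min (Set.range nf) ⟨nf 0, 0, rfl⟩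
    have hk₀ : ∀ k, nf k₀ ≤ nf k := fun k => not_lt.1 (hv _ ⟨k, rfl⟩)
    have hbad : Set.PartiallyWellOrderedOn.IsBadSeq LTree.Le Set.univ
        (fun m => if m < nf k₀ then f m else g (k₀ + (m - nf k₀))) := by
      refine ⟨fun _ => Set.mem_univ _, fun a b hab hle => ?_⟩
      simp only at hle
      by_cases hb : b < nf k₀
      · rw [if_pos (hab.trans hb), if_pos hb] at hle
        exact hf.2 a b hab hle
      · rw [if_neg hb] at hle
        by_cases ha : a < nf k₀
        · rw [if_pos ha] at hle
          have h2 : LTree.Le (f a) (f (nf (k₀ + (b - nf k₀)))) :=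
            hle.trans (LTree.Le.of_mem_chl (hnf (k₀ + (b - nf k₀))))
          exact hf.2 a (nf (k₀ + (b - nf k₀))) (lt_of_lt_of_le ha (hk₀ _)) h2
        · rw [if_neg ha] at hle
          exact hgbad _ _ (by omega) hle
    refine hmin (nf k₀) _ (fun m hm => (if_pos hm).symm) ?_ hbad
    simp only [lt_irrefl, if_neg, Nat.sub_self, Nat.add_zero]
    exact LTree.sizeOf_lt_of_mem_chl (hnf k₀)
  have hLists := Set.PartiallyWellOrderedOn.partiallyWellOrderedOn_sublistForall₂ LTree.Le hS
  obtain ⟨g, hg⟩ := hLists.exists_monotone_subseq (f := fun n => (f n).chl) (fun n x hx => ⟨n, hx⟩)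
  obtain ⟨m, n, hmn, hq⟩ := hwqo fun k => (f (g k)).lab
  refine hf.2 (g m) (g n) (g.strictMono hmn) ?_
  have hroot : LTree.Le (.node (f (g m)).lab (f (g m)).chl) (.node (f (g n)).lab (f (g n)).chl) := by
    refine LTree.Le.root hq fun s hs => ?_
    obtain ⟨t, ht, hst⟩ := sublistForall₂_mem (hg m n hmn.le) s hs
    exact LTree.Le.inner t ht hst
  rwa [← LTree.eta, ← LTree.eta] at hroot

namespace QTree
variable {Q : Type*}

def bound (T : QTree Q) : ℕ := T.nodes.sup List.sum + 1

def children (T : QTree Q) (σ : List ℕ) : List ℕ :=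
  (List.range T.bound).filter (fun i => σ ++ [i] ∈ T.nodes)

theorem mem_children {T : QTree Q} {σ : List ℕ} {i : ℕ} :
    i ∈ T.children σ ↔ σ ++ [i] ∈ T.nodes := by
  simp only [children, List.mem_filter, List.mem_range, decide_eq_true_eq]
  refine ⟨fun h => h.2, fun h => ⟨?_, h⟩⟩
  have h1 : (σ ++ [i]).sum ≤ T.nodes.sup List.sum := Finset.le_sup h
  have h2 : i ≤ (σ ++ [i]).sum := by simp [List.sum_append]
  simp only [bound]
  omega

def toL (T : QTree Q) : ℕ → List ℕ → LTree Q
  | 0, σ => .node (T.label σ) []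
  | n + 1, σ => .node (T.label σ) ((T.children σ).map fun i => T.toL n (σ ++ [i]))

theorem key [Preorder Q] {T V : QTree Q} {A B : LTree Q} (h : LTree.Le A B) :
    ∀ (σ υ : List ℕ) (fT fV : ℕ), σ ∈ T.nodes → υ ∈ V.nodes →
    A = T.toL fT σ → B = V.toL fV υ →
    (∀ τ ∈ T.nodes, σ <+: τ → τ.length ≤ σ.length + fT) →
    ∃ f : List ℕ → List ℕ,
      (∀ τ ∈ T.nodes, σ <+: τ → f τ ∈ V.nodes ∧ υ <+: f τ ∧ T.label τ ≤ V.label (f τ)) ∧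
      (∀ τ₁ ∈ T.nodes, ∀ τ₂ ∈ T.nodes, σ <+: τ₁ → τ₁ <+: τ₂ → f τ₁ <+: f τ₂) := by
  classical
  induction h with
  | inner t ht h ih =>
    intro σ υ fT fV hσ hυ hA hB hdepth
    cases fV with
    | zero =>
      simp only [toL] at hB
      injection hB with hq hts
      subst hts
      exact absurd ht List.not_mem_nil
    | succ n =>
      simp only [toL] at hB
      injection hB with hq hts
      subst hts
      obtain ⟨i, hi, rfl⟩ := List.mem_map.1 ht
      have hi' : υ ++ [i] ∈ V.nodes := mem_children.1 hi
      obtain ⟨f, hf1, hf2⟩ := ih σ (υ ++ [i]) fT n hσ hi' hA rfl hdepth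
      refine ⟨f, fun τ hτ hστ => ?_, hf2⟩
      obtain ⟨m1, m2, m3⟩ := hf1 τ hτ hστ
      exact ⟨m1, (υ.prefix_append [i]).trans m2, m3⟩
  | @root p ss q ts hpq hss ih =>
    intro σ υ fT fV hσ hυ hA hB hdepth
    have hlabB : q = V.label υ := by
      cases fV <;> (simp only [toL] at hB; injection hB with h1 h2)
    cases fT with
    | zero =>
      simp only [toL] at hA
      injection hA with hp hss'
      refine ⟨fun _ => υ, fun τ hτ hστ => ?_, fun τ₁ _ τ₂ _ _ _ => List.prefix_refl υ⟩
      have hτσ : τ = σ := by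
        have h1 := hdepth τ hτ hστ
        exact (hστ.eq_of_length (le_antisymm hστ.length_le (by omega))).symm
      subst hτσ
      exact ⟨hυ, List.prefix_refl υ, hp ▸ hlabB ▸ hpq⟩
    | succ k =>
      simp only [toL] at hA
      injection hA with hp hssEq
      subst hssEq
      have H : ∀ i : ℕ, ∃ f : List ℕ → List ℕ, σ ++ [i] ∈ T.nodes →
          ((∀ τ ∈ T.nodes, σ ++ [i] <+: τ → f τ ∈ V.nodes ∧ υ <+: f τ ∧
              T.label τ ≤ V.label (f τ)) ∧
           (∀ τ₁ ∈ T.nodes, ∀ τ₂ ∈ T.nodes, σ ++ [i] <+: τ₁ → τ₁ <+: τ₂ → f τ₁ <+: f τ₂)) := by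
        intro i
        by_cases hmem : σ ++ [i] ∈ T.nodes
        · have hs : T.toL k (σ ++ [i]) ∈ (T.children σ).map fun i => T.toL k (σ ++ [i]) :=
            List.mem_map.2 ⟨i, mem_children.2 hmem, rfl⟩
          obtain ⟨f, hf⟩ := ih _ hs (σ ++ [i]) υ k fV hmem hυ rfl hB (by
            intro τ hτ hpre
            have := hdepth τ hτ ((σ.prefix_append [i]).trans hpre)
            simp only [List.length_append, List.length_cons, List.length_nil]
            omega)
          exact ⟨f, fun _ => hf⟩
        · exact ⟨id, fun h => absurd h hmem⟩
      choose F hF using H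
      set f : List ℕ → List ℕ :=
        fun τ => if τ = σ then υ else F ((τ.drop σ.length).headI) τ with hfdef
      have main : ∀ τ ∈ T.nodes, σ <+: τ →
          f τ ∈ V.nodes ∧ υ <+: f τ ∧ T.label τ ≤ V.label (f τ) := by
        intro τ hτ hστ
        by_cases hts : τ = σ
        · subst hts
          simp only [hfdef, if_pos rfl]
          exact ⟨hυ, List.prefix_refl υ, hp ▸ hlabB ▸ hpq⟩
        · obtain ⟨ρ, rfl⟩ := hστ
          have hρ : ρ ≠ [] := by rintro rfl; simp at hts
          obtain ⟨j, ρ', rfl⟩ := List.exists_cons_of_ne_nil hρ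
          have hmem : σ ++ [j] ∈ T.nodes :=
            T.prefix_closed _ hτ _ ⟨ρ', by simp⟩
          have hpre : σ ++ [j] <+: σ ++ j :: ρ' := ⟨ρ', by simp⟩
          have hdrop : ((σ ++ j :: ρ').drop σ.length).headI = j := by
            rw [List.drop_left]
            rfl
          simp only [hfdef, if_neg hts, hdrop]
          exact (hF j hmem).1 _ hτ hpre
      refine ⟨f, main, ?_⟩
      intro τ₁ hτ₁ τ₂ hτ₂ hστ₁ h12
      by_cases h1 : τ₁ = σ
      · subst h1
        simp only [hfdef, if_pos rfl]
        exact (main τ₂ hτ₂ h12).2.1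
      · have h2 : τ₂ ≠ σ := by
          rintro rfl
          exact h1 (h12.eq_of_length (le_antisymm h12.length_le hστ₁.length_le))
        obtain ⟨ρ, rfl⟩ := hστ₁
        have hρ : ρ ≠ [] := by rintro rfl; simp at h1
        obtain ⟨j, ρ', rfl⟩ := List.exists_cons_of_ne_nil hρ
        obtain ⟨δ, rfl⟩ := h12
        have hmem : σ ++ [j] ∈ T.nodes :=
          T.prefix_closed _ hτ₁ _ ⟨ρ', by simp⟩
        have hpre : σ ++ [j] <+: σ ++ j :: ρ' := ⟨ρ', by simp⟩
        have hd1 : ((σ ++ j :: ρ').drop σ.length).headI = j := by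
          rw [List.drop_left]; rfl
        have hd2 : (((σ ++ j :: ρ') ++ δ).drop σ.length).headI = j := by
          rw [List.append_assoc, List.drop_left]; rfl
        simp only [hfdef, if_neg h1, if_neg h2, hd1, hd2]
        exact (hF j hmem).2 _ hτ₁ _ hτ₂ hpre ⟨δ, rfl⟩

end QTree

/-- labeled Kruskal theorem: if `Q` is a well quasi-order, then the finite
`Q`-labeled trees with the h-preorder form a well quasi-order. -/
theorem qtree_wqo {Q : Type*} [Preorder Q]
    (hwqo : ∀ f : ℕ → Q, ∃ m n : ℕ, m < n ∧ f m ≤ f n) :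
    ∀ T : ℕ → QTree Q, ∃ m n : ℕ, m < n ∧ (T m).hle (T n) := by
  intro T
  obtain ⟨m, n, hmn, hle⟩ := Set.partiallyWellOrderedOn_iff_exists_lt.1 (ltree_pwo hwqo)
    (fun k => (T k).toL ((T k).nodes.sup List.length) []) (fun _ => Set.mem_univ _)
  refine ⟨m, n, hmn, ?_⟩
  have hnil : ∀ k, ([] : List ℕ) ∈ (T k).nodes := fun k => by
    obtain ⟨σ, hσ⟩ := (T k).nonempty
    exact (T k).prefix_closed σ hσ [] List.nil_prefix
  obtain ⟨f, h1, h2⟩ := QTree.key hle [] [] _ _ (hnil m) (hnil n) rfl rfl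
    (fun τ hτ _ => by simpa using Finset.le_sup (f := List.length) hτ)
  exact ⟨f, fun σ hσ => (h1 σ hσ List.nil_prefix).1,
    fun σ hσ τ hτ hστ => h2 σ hσ τ hτ List.nil_prefix hστ,
    fun σ hσ => (h1 σ hσ List.nil_prefix).2.2⟩
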